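/- Let k be a field, Q a finite quiver without oriented cycles, and let I, J ⊆ (kQ)_{≥2} be two-sided ideals of the path algebra kQ. Then the quotient algebras kQ/I and kQ/J are isomorphic as k^{Q₀}-algebras if and only if there exists a k^{Q₀}-algebra automorphism g of kQ with g(I) = J. -/

import Mathlib

/-- A finite quiver on a vertex set `V`: a family of finite types of arrows `Arrow i j`
from `i` to `j`. -/
structure FinQuiver (V : Type) where
  Arrow : V → V → Type
  [fintypeArrow : ∀ i j, Fintype (Arrow i j)]

attribute [instance] FinQuiver.fintypeArrow

/-- Paths in a finite quiver: `QPath Q i j` is the type of paths from `i` to `j`. -/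
inductive QPath {V : Type} (Q : FinQuiver V) : V → V → Type
  | nil (i : V) : QPath Q i i
  | cons {i j l : V} (p : QPath Q i j) (a : Q.Arrow j l) : QPath Q i l

namespace QPath

variable {V : Type} {Q : FinQuiver V}

/-- The length (number of arrows) of a path. -/
def length : ∀ {i j : V}, QPath Q i j → ℕ
  | _, _, nil _ => 0
  | _, _, cons p _ => length p + 1

/-- Concatenation of paths. -/
def comp : ∀ {i j l : V}, QPath Q i j → QPath Q j l → QPath Q i l
  | _, _, _, p, nil _ => p
  | _, _, _, p, cons q a => cons (comp p q) a

/-- Transport a path along equalities of its endpoints. -/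
def cast {i j i' j' : V} (hi : i = i') (hj : j = j') (p : QPath Q i j) : QPath Q i' j' := by
  subst hi; subst hj; exact p

end QPath

/-- The quiver `Q` has no oriented cycles: every path from a vertex to itself has
length zero. -/
def FinQuiver.NoCycles {V : Type} (Q : FinQuiver V) : Prop :=
  ∀ (i : V) (p : QPath Q i i), p.length = 0

/-- A realization of the `k`-algebra `A` as the path algebra of the quiver `Q`:
a `k`-basis indexed by the paths of `Q`, such that basis vectors multiply by
concatenation of composable paths (and give `0` for non-composable paths), and such
that the sum of the length-zero paths is `1`.  The basis vector of a path lying in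
`e_i (kQ) e_j` is indexed by the corresponding path from `j` to `i`. -/
structure PathAlgStructure (k : Type) [CommRing k] {V : Type} [Fintype V] [DecidableEq V]
    (Q : FinQuiver V) (A : Type) [Ring A] [Algebra k A] where
  basis : Module.Basis (Σ i : V, Σ j : V, QPath Q i j) k A
  basis_mul : ∀ {a b c d : V} (p : QPath Q a b) (q : QPath Q c d),
    basis ⟨c, d, q⟩ * basis ⟨a, b, p⟩ =
      if h : b = c then basis ⟨a, d, p.comp (q.cast h.symm rfl)⟩ else 0
  one_def : (1 : A) = ∑ i : V, basis ⟨i, i, QPath.nil i⟩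

namespace PathAlgStructure

variable {k : Type} [CommRing k] {V : Type} [Fintype V] [DecidableEq V]
  {Q : FinQuiver V} {A : Type} [Ring A] [Algebra k A]

/-- The idempotent `e_i` of the path algebra: the length-zero path at the vertex `i`. -/
noncomputable def idem (ps : PathAlgStructure k Q A) (i : V) : A :=
  ps.basis ⟨i, i, QPath.nil i⟩

/-- `(kQ)_{≥ n}`: the span of the paths of length at least `n`. -/
def degreeGE (ps : PathAlgStructure k Q A) (n : ℕ) : Submodule k A :=
  Submodule.span k {x | ∃ (i j : V) (p : QPath Q i j), n ≤ p.length ∧ x = ps.basis ⟨i, j, p⟩}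

/-- `e_i (kQ) e_j`: the span of the paths from `j` to `i`. -/
def pathSpan (ps : PathAlgStructure k Q A) (i j : V) : Submodule k A :=
  Submodule.span k {x | ∃ p : QPath Q j i, x = ps.basis ⟨j, i, p⟩}

/-- `V_{ij}^{prim}`: the span of the arrows from `j` to `i`. -/
def arrowSpan (ps : PathAlgStructure k Q A) (i j : V) : Submodule k A :=
  Submodule.span k {x | ∃ a : Q.Arrow j i, x = ps.basis ⟨j, i, (QPath.nil j).cons a⟩}

/-- `V_{ij}^{nonprim} = e_i (kQ)_{≥2} e_j`: the span of the paths from `j` to `i`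
of length at least two. -/
def nonprimSpan (ps : PathAlgStructure k Q A) (i j : V) : Submodule k A :=
  Submodule.span k {x | ∃ p : QPath Q j i, 2 ≤ p.length ∧ x = ps.basis ⟨j, i, p⟩}

end PathAlgStructure

/-- A bundled unital associative `k`-algebra. -/
structure AlgPkg (k : Type) [CommRing k] where
  carrier : Type
  [instRing : Ring carrier]
  [instAlgebra : Algebra k carrier]

attribute [instance] AlgPkg.instRing AlgPkg.instAlgebra

namespace QPath
variable {V : Type} {Q : FinQuiver V}
@[simp] lemma cast_eq_self {i j : V} (hi : i = i) (hj : j = j) (p : QPath Q i j) :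
    p.cast hi hj = p := rfl
@[simp] lemma comp_nil' {i j : V} (p : QPath Q i j) : p.comp (nil j) = p := by rw [comp]
@[simp] lemma comp_cons' {i j l m : V} (p : QPath Q i j) (q : QPath Q j l) (a : Q.Arrow l m) :
    p.comp (cons q a) = cons (p.comp q) a := by rw [comp]
@[simp] lemma length_nil (i : V) : (nil (Q := Q) i).length = 0 := by rw [length]
@[simp] lemma length_cons {i j l : V} (p : QPath Q i j) (a : Q.Arrow j l) :
    (cons p a).length = p.length + 1 := by rw [length]
@[simp] lemma nil_comp : ∀ {i j : V} (p : QPath Q i j), (nil i).comp p = p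
  | _, _, nil _ => by rw [comp]
  | _, _, cons p a => by rw [comp, nil_comp]
@[simp] lemma length_comp : ∀ {i j l : V} (p : QPath Q i j) (q : QPath Q j l),
    (p.comp q).length = p.length + q.length
  | _, _, _, p, nil _ => by simp
  | _, _, _, p, cons q a => by rw [comp]; simp [length_comp p q]; omega
@[simp] lemma length_cast {i j i' j' : V} (hi : i = i') (hj : j = j') (p : QPath Q i j) :
    (p.cast hi hj).length = p.length := by subst hi; subst hj; rfl
def verts : ∀ {i j : V}, QPath Q i j → List V
  | i, _, nil _ => [i]
  | _, l, cons p _ => verts p ++ [l]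
lemma length_verts : ∀ {i j : V} (p : QPath Q i j), (verts p).length = p.length + 1
  | _, _, nil _ => by rw [verts]; simp
  | _, _, cons p a => by rw [verts]; simp [length_verts p]
lemma exists_path_of_mem_verts : ∀ {i j v : V} (p : QPath Q i j), v ∈ verts p →
    Nonempty (QPath Q v j)
  | i, _, v, nil _, h => by rw [verts] at h; simp at h; exact ⟨h ▸ nil v⟩
  | _, _, v, cons p a, h => by
      rw [verts, List.mem_append] at h
      rcases h with h | h
      · exact ⟨cons (exists_path_of_mem_verts p h).some a⟩
      · simp at h; exact ⟨h ▸ nil _⟩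
lemma verts_nodup (hQ : Q.NoCycles) : ∀ {i j : V} (p : QPath Q i j), (verts p).Nodup
  | _, _, nil _ => by rw [verts]; simp
  | _, l, cons p a => by
      rw [verts, List.nodup_append]
      refine ⟨verts_nodup hQ p, by simp, ?_⟩
      intro v hv b hb hvb
      simp at hb
      subst hb
      subst hvb
      obtain ⟨q⟩ := exists_path_of_mem_verts p hv
      have := hQ _ (cons q a)
      simp at this
lemma length_lt_card [Fintype V] (hQ : Q.NoCycles) {i j : V} (p : QPath Q i j) :
    p.length + 1 ≤ Fintype.card V := by
  rw [← length_verts p]; exact (verts_nodup hQ p).length_le_card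
end QPath
namespace PathAlgStructure
variable {k : Type} [CommRing k] {V : Type} [Fintype V] [DecidableEq V]
  {Q : FinQuiver V} {A : Type} [Ring A] [Algebra k A] (ps : PathAlgStructure k Q A)

lemma idem_mul_basis {c d : V} (q : QPath Q c d) :
    ps.idem d * ps.basis ⟨c, d, q⟩ = ps.basis ⟨c, d, q⟩ := by
  have h := ps.basis_mul q (QPath.nil d)
  rw [dif_pos rfl] at h
  rw [idem, h]
  simp

lemma idem_mul_basis_ne {c d l : V} (q : QPath Q c d) (h : d ≠ l) :
    ps.idem l * ps.basis ⟨c, d, q⟩ = 0 := by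
  have h' := ps.basis_mul q (QPath.nil l)
  rw [dif_neg h] at h'
  rw [idem, h']

lemma basis_mul_idem {c d : V} (q : QPath Q c d) :
    ps.basis ⟨c, d, q⟩ * ps.idem c = ps.basis ⟨c, d, q⟩ := by
  have h := ps.basis_mul (QPath.nil c) q
  rw [dif_pos rfl] at h
  rw [idem, h]
  simp

lemma basis_mul_idem_ne {c d l : V} (q : QPath Q c d) (h : l ≠ c) :
    ps.basis ⟨c, d, q⟩ * ps.idem l = 0 := by
  have h' := ps.basis_mul (QPath.nil l) q
  rw [dif_neg h] at h'
  rw [idem, h']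

@[simp] lemma idem_mul_self (i : V) : ps.idem i * ps.idem i = ps.idem i :=
  ps.idem_mul_basis (QPath.nil i)

lemma idem_mul_idem_ne {i j : V} (h : j ≠ i) : ps.idem i * ps.idem j = 0 :=
  ps.idem_mul_basis_ne (QPath.nil j) h

lemma basis_cons_eq_mul {i j l : V} (p : QPath Q i j) (a : Q.Arrow j l) :
    ps.basis ⟨i, l, QPath.cons p a⟩ =
      ps.basis ⟨j, l, (QPath.nil j).cons a⟩ * ps.basis ⟨i, j, p⟩ := by
  have h := ps.basis_mul p ((QPath.nil j).cons a)
  rw [dif_pos rfl] at h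
  rw [h]
  simp

lemma basis_mem_degreeGE {i j : V} (p : QPath Q i j) {n : ℕ} (h : n ≤ p.length) :
    ps.basis ⟨i, j, p⟩ ∈ ps.degreeGE n :=
  Submodule.subset_span ⟨i, j, p, h, rfl⟩

lemma degreeGE_zero : ps.degreeGE 0 = ⊤ := by
  rw [eq_top_iff, ← ps.basis.span_eq]
  apply Submodule.span_mono
  rintro x ⟨⟨i, j, p⟩, rfl⟩
  exact ⟨i, j, p, Nat.zero_le _, rfl⟩

lemma degreeGE_anti {m n : ℕ} (h : m ≤ n) : ps.degreeGE n ≤ ps.degreeGE m :=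
  Submodule.span_mono fun x ⟨i, j, p, hp, hx⟩ => ⟨i, j, p, h.trans hp, hx⟩

lemma degreeGE_mul (m n : ℕ) : ps.degreeGE m * ps.degreeGE n ≤ ps.degreeGE (m + n) := by
  rw [degreeGE, degreeGE, Submodule.span_mul_span, Submodule.span_le]
  rintro z ⟨x, ⟨i, j, p, hp, rfl⟩, y, ⟨c, d, q, hq, rfl⟩, rfl⟩
  show ps.basis ⟨i, j, p⟩ * ps.basis ⟨c, d, q⟩ ∈ ps.degreeGE (m + n)
  rw [ps.basis_mul q p]
  split
  · next h =>
    apply Submodule.subset_span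
    refine ⟨c, j, _, ?_, rfl⟩
    simp
    omega
  · exact Submodule.zero_mem _

lemma mul_mem_degreeGE {m n : ℕ} {x y : A} (hx : x ∈ ps.degreeGE m) (hy : y ∈ ps.degreeGE n)
    {r : ℕ} (hr : r ≤ m + n) : x * y ∈ ps.degreeGE r :=
  ps.degreeGE_anti hr (ps.degreeGE_mul m n (Submodule.mul_mem_mul hx hy))

lemma degreeGE_card_eq_bot (hQ : Q.NoCycles) : ps.degreeGE (Fintype.card V) = ⊥ := by
  rw [degreeGE, Submodule.span_eq_bot]
  rintro x ⟨i, j, p, hp, rfl⟩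
  have := QPath.length_lt_card hQ p
  omega

end PathAlgStructure
namespace PathAlgStructure
variable {k : Type} [CommRing k] {V : Type} [Fintype V] [DecidableEq V]
  {Q : FinQuiver V} {A : Type} [Ring A] [Algebra k A] (ps : PathAlgStructure k Q A)
  (x : ∀ i j : V, Q.Arrow i j → A)

noncomputable def liftPath : ∀ {i j : V}, QPath Q i j → A
  | i, _, QPath.nil _ => ps.idem i
  | _, _, QPath.cons p a => x _ _ a * liftPath p

@[simp] lemma liftPath_nil (i : V) : liftPath ps x (QPath.nil i) = ps.idem i := by rw [liftPath]

lemma liftPath_cons {i j l : V} (p : QPath Q i j) (a : Q.Arrow j l) :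
    liftPath ps x (QPath.cons p a) = x j l a * liftPath ps x p := by rw [liftPath]

lemma idem_mul_liftPath
    (hx1 : ∀ (i j : V) (a : Q.Arrow i j), ps.idem j * x i j a = x i j a) :
    ∀ {i j : V} (p : QPath Q i j), ps.idem j * liftPath ps x p = liftPath ps x p
  | _, _, QPath.nil _ => by rw [liftPath_nil, ps.idem_mul_self]
  | _, _, QPath.cons p a => by rw [liftPath_cons, ← mul_assoc, hx1]

lemma liftPath_mul_idem
    (hx2 : ∀ (i j : V) (a : Q.Arrow i j), x i j a * ps.idem i = x i j a) :
    ∀ {i j : V} (p : QPath Q i j), liftPath ps x p * ps.idem i = liftPath ps x p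
  | _, _, QPath.nil _ => by rw [liftPath_nil, ps.idem_mul_self]
  | _, _, QPath.cons p a => by
      rw [liftPath_cons, mul_assoc, liftPath_mul_idem hx2 p]

lemma idem_mul_liftPath_ne
    (hx1 : ∀ (i j : V) (a : Q.Arrow i j), ps.idem j * x i j a = x i j a)
    {i j c : V} (p : QPath Q i j) (h : c ≠ j) :
    ps.idem c * liftPath ps x p = 0 := by
  rw [← idem_mul_liftPath ps x hx1 p, ← mul_assoc, ps.idem_mul_idem_ne (Ne.symm h), zero_mul]

lemma liftPath_mul_liftPath
    (hx1 : ∀ (i j : V) (a : Q.Arrow i j), ps.idem j * x i j a = x i j a)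
    (hx2 : ∀ (i j : V) (a : Q.Arrow i j), x i j a * ps.idem i = x i j a) :
    ∀ {a b c d : V} (p : QPath Q a b) (q : QPath Q c d),
    liftPath ps x q * liftPath ps x p =
      if h : b = c then liftPath ps x (p.comp (q.cast h.symm rfl)) else 0
  | a, b, c, _, p, QPath.nil _ => by
      rw [liftPath_nil]
      by_cases h : b = c
      · subst h
        rw [dif_pos rfl, QPath.cast_eq_self, QPath.comp_nil']
        exact idem_mul_liftPath ps x hx1 p
      · rw [dif_neg h]
        exact idem_mul_liftPath_ne ps x hx1 p (Ne.symm h)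
  | a, b, c, d, p, @QPath.cons _ _ _ m _ q α => by
      rw [liftPath_cons, mul_assoc, liftPath_mul_liftPath hx1 hx2 p q]
      by_cases h : b = c
      · subst h
        rw [dif_pos rfl, dif_pos rfl, QPath.cast_eq_self, QPath.cast_eq_self,
          QPath.comp_cons', liftPath_cons]
      · rw [dif_neg h, dif_neg h, mul_zero]

noncomputable def pathHom : A →ₗ[k] A :=
  ps.basis.constr k (fun s => liftPath ps x s.2.2)

@[simp] lemma pathHom_basis {i j : V} (p : QPath Q i j) :
    pathHom ps x (ps.basis ⟨i, j, p⟩) = liftPath ps x p :=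
  ps.basis.constr_basis k _ ⟨i, j, p⟩

lemma pathHom_one : pathHom ps x 1 = 1 := by
  rw [ps.one_def, map_sum]
  simp only [pathHom_basis, liftPath_nil, idem]

lemma pathHom_mul
    (hx1 : ∀ (i j : V) (a : Q.Arrow i j), ps.idem j * x i j a = x i j a)
    (hx2 : ∀ (i j : V) (a : Q.Arrow i j), x i j a * ps.idem i = x i j a) :
    ∀ z w : A, pathHom ps x (z * w) = pathHom ps x z * pathHom ps x w := by
  have key : (LinearMap.mul k A).compr₂ (pathHom ps x) =
      (LinearMap.mul k A).compl₁₂ (pathHom ps x) (pathHom ps x) := by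
    apply ps.basis.ext; rintro ⟨a, b, p⟩
    apply ps.basis.ext; rintro ⟨c, d, q⟩
    simp only [LinearMap.compr₂_apply, LinearMap.compl₁₂_apply, LinearMap.mul_apply',
      pathHom_basis]
    rw [ps.basis_mul q p, liftPath_mul_liftPath ps x hx1 hx2 q p]
    by_cases h : d = a
    · rw [dif_pos h, dif_pos h, pathHom_basis]
    · rw [dif_neg h, dif_neg h, map_zero]
  intro z w
  have h1 := DFunLike.congr_fun (DFunLike.congr_fun key z) w
  simpa using h1

noncomputable def pathAlgHom
    (hx1 : ∀ (i j : V) (a : Q.Arrow i j), ps.idem j * x i j a = x i j a)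
    (hx2 : ∀ (i j : V) (a : Q.Arrow i j), x i j a * ps.idem i = x i j a) : A →ₐ[k] A :=
  AlgHom.ofLinearMap (pathHom ps x) (pathHom_one ps x) (pathHom_mul ps x hx1 hx2)

@[simp] lemma pathAlgHom_basis
    (hx1 : ∀ (i j : V) (a : Q.Arrow i j), ps.idem j * x i j a = x i j a)
    (hx2 : ∀ (i j : V) (a : Q.Arrow i j), x i j a * ps.idem i = x i j a)
    {i j : V} (p : QPath Q i j) :
    pathAlgHom ps x hx1 hx2 (ps.basis ⟨i, j, p⟩) = liftPath ps x p :=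
  pathHom_basis ps x p

@[simp] lemma pathAlgHom_idem
    (hx1 : ∀ (i j : V) (a : Q.Arrow i j), ps.idem j * x i j a = x i j a)
    (hx2 : ∀ (i j : V) (a : Q.Arrow i j), x i j a * ps.idem i = x i j a) (i : V) :
    pathAlgHom ps x hx1 hx2 (ps.idem i) = ps.idem i := by
  show pathAlgHom ps x hx1 hx2 (ps.basis ⟨i, i, QPath.nil i⟩) = ps.idem i
  rw [pathAlgHom_basis, liftPath_nil]

lemma comp_pathAlgHom
    (hx1 : ∀ (i j : V) (a : Q.Arrow i j), ps.idem j * x i j a = x i j a)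
    (hx2 : ∀ (i j : V) (a : Q.Arrow i j), x i j a * ps.idem i = x i j a)
    {B : Type} [Ring B] [Algebra k B] (f g : A →ₐ[k] B)
    (hfg : ∀ i, f (ps.idem i) = g (ps.idem i))
    (hxg : ∀ (i j : V) (a : Q.Arrow i j),
      g (x i j a) = f (ps.basis ⟨i, j, (QPath.nil i).cons a⟩)) :
    ∀ z, g (pathAlgHom ps x hx1 hx2 z) = f z := by
  suffices h : g.toLinearMap ∘ₗ (pathAlgHom ps x hx1 hx2).toLinearMap = f.toLinearMap by
    intro z
    exact DFunLike.congr_fun h z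
  apply ps.basis.ext
  rintro ⟨i, j, p⟩
  simp only [LinearMap.comp_apply, AlgHom.toLinearMap_apply, pathAlgHom_basis]
  induction p with
  | nil => rw [liftPath_nil]; exact (hfg _).symm
  | cons p a ih =>
      rw [liftPath_cons, map_mul, hxg, ih, ← map_mul, ← ps.basis_cons_eq_mul]

lemma pathAlg_bijective (hQ : Q.NoCycles) (ρ : A →ₐ[k] A)
    (h0 : ∀ i, ρ (ps.idem i) = ps.idem i)
    (h1 : ∀ (i j : V) (a : Q.Arrow i j),
      ρ (ps.basis ⟨i, j, (QPath.nil i).cons a⟩) - ps.basis ⟨i, j, (QPath.nil i).cons a⟩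
        ∈ ps.degreeGE 2) :
    Function.Bijective ρ := by
  have h0' : ∀ v : V, ρ (ps.basis ⟨v, v, QPath.nil v⟩) = ps.basis ⟨v, v, QPath.nil v⟩ :=
    fun v => h0 v
  have step1 : ∀ {i j : V} (p : QPath Q i j),
      ρ (ps.basis ⟨i, j, p⟩) - ps.basis ⟨i, j, p⟩ ∈ ps.degreeGE (p.length + 1) := by
    intro i j p
    induction p with
    | nil =>
        rw [h0', sub_self]
        exact Submodule.zero_mem _
    | cons p a ih =>
        rename_i m l
        have hr := h1 m l a
        have expand : ρ (ps.basis ⟨i, l, QPath.cons p a⟩) - ps.basis ⟨i, l, QPath.cons p a⟩ =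
            ps.basis ⟨m, l, (QPath.nil m).cons a⟩ * (ρ (ps.basis ⟨i, m, p⟩) - ps.basis ⟨i, m, p⟩)
            + (ρ (ps.basis ⟨m, l, (QPath.nil m).cons a⟩) - ps.basis ⟨m, l, (QPath.nil m).cons a⟩)
                * ps.basis ⟨i, m, p⟩
            + (ρ (ps.basis ⟨m, l, (QPath.nil m).cons a⟩) - ps.basis ⟨m, l, (QPath.nil m).cons a⟩)
                * (ρ (ps.basis ⟨i, m, p⟩) - ps.basis ⟨i, m, p⟩) := by
          rw [ps.basis_cons_eq_mul p a, map_mul]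
          noncomm_ring
        rw [expand]
        simp only [QPath.length_cons]
        refine Submodule.add_mem _ (Submodule.add_mem _ ?_ ?_) ?_
        · exact ps.mul_mem_degreeGE
            (ps.basis_mem_degreeGE ((QPath.nil m).cons a) (n := 1) (by simp)) ih (by omega)
        · exact ps.mul_mem_degreeGE hr (ps.basis_mem_degreeGE p le_rfl) (by omega)
        · exact ps.mul_mem_degreeGE hr ih (by omega)
  set N : Module.End k A := ρ.toLinearMap - 1 with hN
  have hNapp : ∀ z : A, N z = ρ z - z := by
    intro z
    simp [hN, LinearMap.sub_apply]
  have step2 : ∀ (n : ℕ) (z : A), z ∈ ps.degreeGE n → N z ∈ ps.degreeGE (n + 1) := by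
    intro n z hz
    induction hz using Submodule.span_induction with
    | mem w hw =>
        obtain ⟨i, j, p, hp, rfl⟩ := hw
        rw [hNapp]
        exact ps.degreeGE_anti (by omega) (step1 p)
    | zero => rw [map_zero]; exact Submodule.zero_mem _
    | add u v _ _ hu hv => rw [map_add]; exact Submodule.add_mem _ hu hv
    | smul c u _ hu => rw [map_smul]; exact Submodule.smul_mem _ _ hu
  have step3 : ∀ (m : ℕ) (z : A), (N ^ m) z ∈ ps.degreeGE m := by
    intro m
    induction m with
    | zero =>
        intro z
        rw [ps.degreeGE_zero]
        exact Submodule.mem_top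
    | succ m ih =>
        intro z
        rw [pow_succ']
        exact step2 m _ (ih z)
  have hnil : N ^ (Fintype.card V) = 0 := by
    ext z
    have h3 := step3 (Fintype.card V) z
    rw [ps.degreeGE_card_eq_bot hQ] at h3
    simpa using h3
  have hu : IsUnit ρ.toLinearMap := by
    have h4 : ρ.toLinearMap = 1 + N := by rw [hN]; abel
    rw [h4]
    exact IsNilpotent.isUnit_one_add ⟨_, hnil⟩
  exact (Module.End.isUnit_iff ρ.toLinearMap).mp hu

end PathAlgStructure
/-- Let `Q` be a finite quiver without oriented cycles and `I, J ⊆ (kQ)_{≥2}` two-sided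
ideals of the path algebra `kQ`.  Then `kQ/I` and `kQ/J` are isomorphic as
`k^{Q₀}`-algebras (expressed by the existence of a common quotient presentation: a
`k`-algebra `B` with surjections `f, g : kQ → B` with kernels `I` and `J` matching up the
idempotents) if and only if there is a `k^{Q₀}`-algebra automorphism `σ` of `kQ` (a
`k`-algebra automorphism fixing each idempotent `e_i`) with `σ(I) = J`. -/
theorem quotients_isomorphic_iff_exists_automorphism (k : Type) [Field k]
    (V : Type) [Fintype V] [DecidableEq V] (Q : FinQuiver V)
    (A : Type) [Ring A] [Algebra k A] (ps : PathAlgStructure k Q A)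
    (hQ : Q.NoCycles)
    (I J : Submodule k A)
    (hI : ∀ a : A, ∀ x ∈ I, a * x ∈ I ∧ x * a ∈ I)
    (hJ : ∀ a : A, ∀ x ∈ J, a * x ∈ J ∧ x * a ∈ J)
    (hIle : I ≤ ps.degreeGE 2) (hJle : J ≤ ps.degreeGE 2) :
    (∃ (B : AlgPkg k) (f g : A →ₐ[k] B.carrier),
        Function.Surjective f ∧ Function.Surjective g ∧
        (∀ x : A, f x = 0 ↔ x ∈ I) ∧ (∀ x : A, g x = 0 ↔ x ∈ J) ∧
        ∀ i : V, f (ps.idem i) = g (ps.idem i)) ↔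
      ∃ σ : A ≃ₐ[k] A, (∀ i : V, σ (ps.idem i) = ps.idem i) ∧
        Submodule.map σ.toLinearMap I = J := by
  constructor
  · rintro ⟨B, f, g, hfs, hgs, hfk, hgk, hfg⟩
    have hx : ∀ (i j : V) (a : Q.Arrow i j), ∃ w : A,
        ps.idem j * w = w ∧ w * ps.idem i = w ∧
        g w = f (ps.basis ⟨i, j, (QPath.nil i).cons a⟩) := by
      intro i j a
      obtain ⟨u, hu⟩ := hgs (f (ps.basis ⟨i, j, (QPath.nil i).cons a⟩))
      refine ⟨ps.idem j * u * ps.idem i, ?_, ?_, ?_⟩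
      · rw [← mul_assoc, ← mul_assoc, ps.idem_mul_self]
      · rw [mul_assoc, ps.idem_mul_self]
      · rw [map_mul, map_mul, hu, ← hfg j, ← hfg i, ← map_mul, ← map_mul,
          ps.idem_mul_basis, ps.basis_mul_idem]
    have hy : ∀ (i j : V) (a : Q.Arrow i j), ∃ w : A,
        ps.idem j * w = w ∧ w * ps.idem i = w ∧
        f w = g (ps.basis ⟨i, j, (QPath.nil i).cons a⟩) := by
      intro i j a
      obtain ⟨u, hu⟩ := hfs (g (ps.basis ⟨i, j, (QPath.nil i).cons a⟩))
      refine ⟨ps.idem j * u * ps.idem i, ?_, ?_, ?_⟩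
      · rw [← mul_assoc, ← mul_assoc, ps.idem_mul_self]
      · rw [mul_assoc, ps.idem_mul_self]
      · rw [map_mul, map_mul, hu, hfg j, hfg i, ← map_mul, ← map_mul,
          ps.idem_mul_basis, ps.basis_mul_idem]
    choose x hx1 hx2 hgx using hx
    choose y hy1 hy2 hfy using hy
    have hgσ : ∀ z, g (ps.pathAlgHom x hx1 hx2 z) = f z :=
      ps.comp_pathAlgHom x hx1 hx2 f g hfg hgx
    have hfτ : ∀ z, f (ps.pathAlgHom y hy1 hy2 z) = g z :=
      ps.comp_pathAlgHom y hy1 hy2 g f (fun i => (hfg i).symm) hfy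
    set σ := ps.pathAlgHom x hx1 hx2 with hσdef
    set τ := ps.pathAlgHom y hy1 hy2 with hτdef
    have hρ1 : Function.Bijective (σ.comp τ) := by
      apply ps.pathAlg_bijective hQ
      · intro i
        rw [AlgHom.comp_apply, hσdef, hτdef, ps.pathAlgHom_idem, ps.pathAlgHom_idem]
      · intro i j a
        apply hJle
        apply (hgk _).mp
        rw [map_sub, AlgHom.comp_apply, hgσ, hfτ, sub_self]
    have hρ2 : Function.Bijective (τ.comp σ) := by
      apply ps.pathAlg_bijective hQ
      · intro i
        rw [AlgHom.comp_apply, hσdef, hτdef, ps.pathAlgHom_idem, ps.pathAlgHom_idem]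
      · intro i j a
        apply hIle
        apply (hfk _).mp
        rw [map_sub, AlgHom.comp_apply, hfτ, hgσ, sub_self]
    have hσinj : Function.Injective ⇑σ := by
      intro u v huv
      apply hρ2.1
      rw [AlgHom.comp_apply, AlgHom.comp_apply, huv]
    have hσsurj : Function.Surjective ⇑σ := by
      intro z
      obtain ⟨w, hw⟩ := hρ1.2 z
      rw [AlgHom.comp_apply] at hw
      exact ⟨τ w, hw⟩
    refine ⟨AlgEquiv.ofBijective σ ⟨hσinj, hσsurj⟩, fun i => ?_, ?_⟩
    · show σ (ps.idem i) = ps.idem i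
      rw [hσdef, ps.pathAlgHom_idem]
    · apply le_antisymm
      · intro w hw
        rw [Submodule.mem_map] at hw
        obtain ⟨z, hz, rfl⟩ := hw
        show σ z ∈ J
        exact (hgk (σ z)).mp (by rw [hgσ]; exact (hfk z).mpr hz)
      · intro w hw
        obtain ⟨z, rfl⟩ := hσsurj w
        exact Submodule.mem_map.mpr
          ⟨z, (hfk z).mp (by rw [← hgσ z]; exact (hgk _).mpr hw), rfl⟩
  · rintro ⟨σ, hσe, hσIJ⟩
    let c : RingCon A :=
    { r := fun u v => u - v ∈ J
      iseqv :=
        ⟨fun u => by show u - u ∈ J; simp,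
         fun {u v} h => by show v - u ∈ J; rw [← neg_sub]; exact J.neg_mem h,
         fun {u v w} h1 h2 => by
           show u - w ∈ J
           have h3 := J.add_mem h1 h2
           rwa [sub_add_sub_cancel] at h3⟩
      mul' := fun {u v s t} h1 h2 => by
        show u * s - v * t ∈ J
        have m1 := (hJ u _ h2).1
        have m2 := (hJ t _ h1).2
        have h3 : u * s - v * t = u * (s - t) + (u - v) * t := by noncomm_ring
        rw [h3]
        exact J.add_mem m1 m2
      add' := fun {u v s t} h1 h2 => by
        show u + s - (v + t) ∈ J
        have h3 : u + s - (v + t) = (u - v) + (s - t) := by abel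
        rw [h3]
        exact J.add_mem h1 h2 }
    let gq : A →ₐ[k] c.Quotient := { toRingHom := c.mk', commutes' := fun r => rfl }
    have hgqs : Function.Surjective ⇑gq := fun q => Quot.inductionOn q fun a => ⟨a, rfl⟩
    have hgq0 : ∀ z : A, gq z = 0 ↔ z ∈ J := by
      intro z
      have h0 : (0 : c.Quotient) = c.mk' 0 := (map_zero c.mk').symm
      rw [show gq z = c.mk' z from rfl, h0]
      have h1 : c.mk' z = c.mk' 0 ↔ c z 0 := c.eq
      rw [h1]
      show z - 0 ∈ J ↔ z ∈ J
      rw [sub_zero]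
    refine ⟨⟨c.Quotient⟩, gq.comp σ.toAlgHom, gq, hgqs.comp σ.surjective, hgqs, ?_, hgq0, ?_⟩
    · intro z
      rw [AlgHom.comp_apply, hgq0]
      rw [← hσIJ]
      constructor
      · rintro ⟨w, hw, he⟩
        have : w = z := σ.injective he
        rwa [← this]
      · intro h
        exact ⟨z, h, rfl⟩
    · intro i
      rw [AlgHom.comp_apply]
      show gq (σ (ps.idem i)) = gq (ps.idem i)
      rw [hσe i]
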